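/- For every V ∈ 𝔤ₙ(λ), the Nomizu operator A_V of the oscillator algebra is given in invariant form by A_V Z = (1/2) η(V) φ(Z) + (1/2) η(Z) φ(V) − θ(Z) E_λ φ(V) + (1/2) g(φ(V), Z) ξ for all Z ∈ 𝔤ₙ(λ). -/

import Mathlib

open scoped RealInnerProductSpace
open Finset

noncomputable section

/-- The underlying inner product space of the oscillator algebra `𝔤ₙ(λ)`:
a `(2n+2)`-dimensional real inner product space. -/
abbrev Osc (n : ℕ) := EuclideanSpace ℝ (Fin (2*n+2))

/-- The basis vectors `e₁, …, eₙ`. -/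
def oe (n : ℕ) (i : Fin n) : Osc n :=
  EuclideanSpace.single ⟨i.1, by have := i.2; omega⟩ 1

/-- The basis vectors `e_{n+1}, …, e_{2n}`. -/
def oE (n : ℕ) (i : Fin n) : Osc n :=
  EuclideanSpace.single ⟨n + i.1, by have := i.2; omega⟩ 1

/-- The basis vector `ξ`. -/
def oXi (n : ℕ) : Osc n := EuclideanSpace.single ⟨2*n, by omega⟩ 1

/-- The basis vector `ζ`. -/
def oZeta (n : ℕ) : Osc n := EuclideanSpace.single ⟨2*n+1, by omega⟩ 1

/-- `br` is the Lie bracket of the oscillator algebra `𝔤ₙ(λ)`: the bilinear map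
determined by `[eᵢ, e_{n+j}] = δᵢⱼ ξ`, `[ζ, eⱼ] = λⱼ e_{n+j}`, `[ζ, e_{n+j}] = −λⱼ eⱼ`,
all other brackets of basis vectors being zero. -/
structure IsOscBracket (n : ℕ) (lam : Fin n → ℝ)
    (br : Osc n →ₗ[ℝ] Osc n →ₗ[ℝ] Osc n) : Prop where
  anti : ∀ X Y : Osc n, br X Y = - br Y X
  ee : ∀ i j : Fin n, br (oe n i) (oe n j) = 0
  eE : ∀ i j : Fin n, br (oe n i) (oE n j) = if i = j then oXi n else 0
  EE : ∀ i j : Fin n, br (oE n i) (oE n j) = 0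
  exi : ∀ i : Fin n, br (oe n i) (oXi n) = 0
  Exi : ∀ i : Fin n, br (oE n i) (oXi n) = 0
  zee : ∀ j : Fin n, br (oZeta n) (oe n j) = lam j • oE n j
  zeE : ∀ j : Fin n, br (oZeta n) (oE n j) = - (lam j • oe n j)
  xize : br (oXi n) (oZeta n) = 0

/-- `nab` is the Levi-Civita connection of the left-invariant metric (evaluated on
left-invariant fields): the bilinear map determined by the Koszul formula
`2 g(∇_X Y, Z) = g([X,Y], Z) − g([Y,Z], X) + g([Z,X], Y)`. -/
def IsLeviCivita (n : ℕ) (br nab : Osc n →ₗ[ℝ] Osc n →ₗ[ℝ] Osc n) : Prop :=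
  ∀ X Y Z : Osc n,
    2 * ⟪nab X Y, Z⟫ = ⟪br X Y, Z⟫ - ⟪br Y Z, X⟫ + ⟪br Z X, Y⟫

/-- The Nomizu operator `A_V X = −∇_X V`. -/
def nomizu {n : ℕ} (nab : Osc n →ₗ[ℝ] Osc n →ₗ[ℝ] Osc n) (V X : Osc n) : Osc n :=
  -(nab X V)

/-- The covariant derivative of the Nomizu operator:
`(∇_X A_V) Y = ∇_X (A_V Y) − A_V (∇_X Y)`. -/
def covNomizu {n : ℕ} (nab : Osc n →ₗ[ℝ] Osc n →ₗ[ℝ] Osc n) (V X Y : Osc n) : Osc n :=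
  nab X (nomizu nab V Y) - nomizu nab V (nab X Y)

/-- The curvature tensor `R(X,Y)Z = ∇_X ∇_Y Z − ∇_Y ∇_X Z − ∇_{[X,Y]} Z`. -/
def curvR {n : ℕ} (br nab : Osc n →ₗ[ℝ] Osc n →ₗ[ℝ] Osc n) (X Y Z : Osc n) : Osc n :=
  nab X (nab Y Z) - nab Y (nab X Z) - nab (br X Y) Z

/-- A unit vector `V ∈ 𝔤ₙ(λ)` is a *minimal* unit vector field if there is an orthonormal
basis `u₁, …, u_{2n+2}` of eigenvectors of `A_Vᵀ A_V` (the eigenvector condition being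
expressed as `g(A_V W, A_V uᵢ) = σᵢ² g(W, uᵢ)` for all `W`) with eigenvalues `σᵢ²` such that
`Σᵢ ((∇_{uᵢ} A_V)uᵢ + A_V R(V, A_V uᵢ)uᵢ)/(1 + σᵢ²) = (Σᵢ σᵢ²/(1 + σᵢ²)) V`. -/
def IsMinimal {n : ℕ} (br nab : Osc n →ₗ[ℝ] Osc n →ₗ[ℝ] Osc n) (V : Osc n) : Prop :=
  ∃ (u : Fin (2*n+2) → Osc n) (σ : Fin (2*n+2) → ℝ),
    (∀ i j, ⟪u i, u j⟫ = if i = j then 1 else 0) ∧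
    (∀ i, ∀ W : Osc n,
      ⟪nomizu nab V W, nomizu nab V (u i)⟫ = (σ i)^2 * ⟪W, u i⟫) ∧
    (∑ i, (1 + (σ i)^2)⁻¹ •
        (covNomizu nab V (u i) (u i) +
          nomizu nab V (curvR br nab V (nomizu nab V (u i)) (u i))))
      = (∑ i, (σ i)^2 / (1 + (σ i)^2)) • V

/-- The operator `φ` with `φ eᵢ = e_{n+i}`, `φ e_{n+i} = −eᵢ`, `φ ξ = φ ζ = 0`. -/
structure IsPhi (n : ℕ) (phi : Osc n →ₗ[ℝ] Osc n) : Prop where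
  he : ∀ i : Fin n, phi (oe n i) = oE n i
  hE : ∀ i : Fin n, phi (oE n i) = - oe n i
  hxi : phi (oXi n) = 0
  hzeta : phi (oZeta n) = 0

/-- The operator `E_λ` with `E_λ eᵢ = λᵢ eᵢ`, `E_λ e_{n+i} = λᵢ e_{n+i}`, `E_λ ξ = E_λ ζ = 0`. -/
structure IsElam (n : ℕ) (lam : Fin n → ℝ) (El : Osc n →ₗ[ℝ] Osc n) : Prop where
  he : ∀ i : Fin n, El (oe n i) = lam i • oe n i
  hE : ∀ i : Fin n, El (oE n i) = lam i • oE n i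
  hxi : El (oXi n) = 0
  hzeta : El (oZeta n) = 0

lemma osc_induction {n : ℕ} {P : Osc n → Prop}
    (he : ∀ i : Fin n, P (oe n i)) (hE : ∀ i : Fin n, P (oE n i))
    (hxi : P (oXi n)) (hz : P (oZeta n))
    (h0 : P 0) (hadd : ∀ x y, P x → P y → P (x + y))
    (hsmul : ∀ (c : ℝ) (x), P x → P (c • x)) :
    ∀ X : Osc n, P X := by
  have hb : ∀ k : Fin (2*n+2), P (EuclideanSpace.single k 1) := by
    intro k
    rcases lt_or_ge k.1 n with h | h
    · have : EuclideanSpace.single k (1:ℝ) = oe n ⟨k.1, h⟩ := by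
        unfold oe; congr 1
      rw [this]; exact he _
    rcases lt_or_ge k.1 (2*n) with h2 | h2
    · have : EuclideanSpace.single k (1:ℝ) = oE n ⟨k.1 - n, by omega⟩ := by
        unfold oE
        exact congrArg (fun j : Fin (2*n+2) => EuclideanSpace.single j (1:ℝ))
          (Fin.ext (show k.1 = n + (k.1 - n) by omega))
      rw [this]; exact hE _
    rcases Nat.lt_or_ge k.1 (2*n+1) with h3 | h3
    · have : EuclideanSpace.single k (1:ℝ) = oXi n := by
        unfold oXi
        exact congrArg (fun j : Fin (2*n+2) => EuclideanSpace.single j (1:ℝ))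
          (Fin.ext (show k.1 = 2*n by omega))
      rw [this]; exact hxi
    · have : EuclideanSpace.single k (1:ℝ) = oZeta n := by
        unfold oZeta
        exact congrArg (fun j : Fin (2*n+2) => EuclideanSpace.single j (1:ℝ))
          (Fin.ext (show k.1 = 2*n+1 by have := k.2; omega))
      rw [this]; exact hz
  intro X
  have hX : X ∈ Submodule.span ℝ
      (Set.range fun k : Fin (2*n+2) => (EuclideanSpace.single k 1 : Osc n)) := by
    have hsp := (EuclideanSpace.basisFun (Fin (2*n+2)) ℝ).toBasis.span_eq
    have : Set.range (⇑(EuclideanSpace.basisFun (Fin (2*n+2)) ℝ).toBasis)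
        = Set.range fun k : Fin (2*n+2) => (EuclideanSpace.single k 1 : Osc n) := by
      ext x; simp [EuclideanSpace.basisFun_apply]
    rw [this] at hsp
    rw [hsp]; trivial
  exact Submodule.span_induction (p := fun x _ => P x)
    (fun x hx => by obtain ⟨k, rfl⟩ := hx; exact hb k) h0
    (fun x y _ _ px py => hadd x y px py) (fun c x _ px => hsmul c x px) hX

namespace OscAux

lemma inner_single_single' {m : ℕ} (a b : Fin m) :
    ⟪(EuclideanSpace.single a (1:ℝ)), EuclideanSpace.single b 1⟫ = if a = b then 1 else 0 := by
  simp [EuclideanSpace.inner_single_left, EuclideanSpace.single_apply, eq_comm]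

variable {n : ℕ}

lemma i_ee (i j : Fin n) : ⟪oe n i, oe n j⟫ = if i = j then 1 else 0 := by
  rw [oe, oe, inner_single_single']
  by_cases h : i = j <;> simp [h, Fin.ext_iff, Fin.val_inj]

lemma i_eE (i j : Fin n) : ⟪oe n i, oE n j⟫ = 0 := by
  rw [oe, oE, inner_single_single', if_neg]
  intro h; rw [Fin.ext_iff] at h; have := i.2; simp at h; omega

lemma i_Ee (i j : Fin n) : ⟪oE n i, oe n j⟫ = 0 := by
  rw [oe, oE, inner_single_single', if_neg]
  intro h; rw [Fin.ext_iff] at h; have := j.2; simp at h; omega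

lemma i_EE (i j : Fin n) : ⟪oE n i, oE n j⟫ = if i = j then 1 else 0 := by
  rw [oE, oE, inner_single_single']
  by_cases h : i = j
  · simp [h]
  · rw [if_neg h, if_neg]
    intro hh; rw [Fin.ext_iff] at hh; simp at hh; exact h (Fin.ext hh)

lemma i_exi (i : Fin n) : ⟪oe n i, oXi n⟫ = 0 := by
  rw [oe, oXi, inner_single_single', if_neg]
  intro h; rw [Fin.ext_iff] at h; have := i.2; simp at h; omega

lemma i_xie (i : Fin n) : ⟪oXi n, oe n i⟫ = 0 := by
  rw [oe, oXi, inner_single_single', if_neg]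
  intro h; rw [Fin.ext_iff] at h; have := i.2; simp at h; omega

lemma i_Exi (i : Fin n) : ⟪oE n i, oXi n⟫ = 0 := by
  rw [oE, oXi, inner_single_single', if_neg]
  intro h; rw [Fin.ext_iff] at h; have := i.2; simp at h; omega

lemma i_xiE (i : Fin n) : ⟪oXi n, oE n i⟫ = 0 := by
  rw [oE, oXi, inner_single_single', if_neg]
  intro h; rw [Fin.ext_iff] at h; have := i.2; simp at h; omega

lemma i_ez (i : Fin n) : ⟪oe n i, oZeta n⟫ = 0 := by
  rw [oe, oZeta, inner_single_single', if_neg]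
  intro h; rw [Fin.ext_iff] at h; have := i.2; simp at h; omega

lemma i_ze (i : Fin n) : ⟪oZeta n, oe n i⟫ = 0 := by
  rw [oe, oZeta, inner_single_single', if_neg]
  intro h; rw [Fin.ext_iff] at h; have := i.2; simp at h; omega

lemma i_Ez (i : Fin n) : ⟪oE n i, oZeta n⟫ = 0 := by
  rw [oE, oZeta, inner_single_single', if_neg]
  intro h; rw [Fin.ext_iff] at h; have := i.2; simp at h; omega

lemma i_zE (i : Fin n) : ⟪oZeta n, oE n i⟫ = 0 := by
  rw [oE, oZeta, inner_single_single', if_neg]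
  intro h; rw [Fin.ext_iff] at h; have := i.2; simp at h; omega

lemma i_xixi : ⟪oXi n, oXi n⟫ = 1 := by
  rw [oXi, inner_single_single', if_pos rfl]

lemma i_xiz : ⟪oXi n, oZeta n⟫ = 0 := by
  rw [oXi, oZeta, inner_single_single', if_neg]
  intro h; rw [Fin.ext_iff] at h; simp at h

lemma i_zxi : ⟪oZeta n, oXi n⟫ = 0 := by
  rw [oXi, oZeta, inner_single_single', if_neg]
  intro h; rw [Fin.ext_iff] at h; simp at h

lemma i_zz : ⟪oZeta n, oZeta n⟫ = 1 := by
  rw [oZeta, inner_single_single', if_pos rfl]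

def IsBasisVec (n : ℕ) (X : Osc n) : Prop :=
  (∃ i, X = oe n i) ∨ (∃ i, X = oE n i) ∨ X = oXi n ∨ X = oZeta n

lemma osc_induction₂ {P : Osc n → Osc n → Prop}
    (hbase : ∀ X Y, IsBasisVec n X → IsBasisVec n Y → P X Y)
    (h0l : ∀ Y, P 0 Y) (h0r : ∀ X, P X 0)
    (haddl : ∀ x y Y, P x Y → P y Y → P (x + y) Y)
    (haddr : ∀ X y z, P X y → P X z → P X (y + z))
    (hsmull : ∀ (c : ℝ) x Y, P x Y → P (c • x) Y)
    (hsmulr : ∀ (c : ℝ) X y, P X y → P X (c • y)) :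
    ∀ X Y : Osc n, P X Y := by
  have inner : ∀ X : Osc n, IsBasisVec n X → ∀ Y, P X Y := by
    intro X hX
    exact osc_induction (P := fun Y => P X Y)
      (fun i => hbase X _ hX (Or.inl ⟨i, rfl⟩))
      (fun i => hbase X _ hX (Or.inr (Or.inl ⟨i, rfl⟩)))
      (hbase X _ hX (Or.inr (Or.inr (Or.inl rfl))))
      (hbase X _ hX (Or.inr (Or.inr (Or.inr rfl))))
      (h0r X) (fun y z => haddr X y z) (fun c y => hsmulr c X y)
  intro X
  exact osc_induction (P := fun X => ∀ Y, P X Y)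
    (fun i => inner _ (Or.inl ⟨i, rfl⟩))
    (fun i => inner _ (Or.inr (Or.inl ⟨i, rfl⟩)))
    (inner _ (Or.inr (Or.inr (Or.inl rfl))))
    (inner _ (Or.inr (Or.inr (Or.inr rfl))))
    h0l (fun x y px py Y => haddl x y Y (px Y) (py Y))
    (fun c x px Y => hsmull c x Y (px Y)) X

end OscAux

namespace OscAux

variable {n : ℕ}

lemma phi_skew (phi : Osc n →ₗ[ℝ] Osc n) (hphi : IsPhi n phi) :
    ∀ X Y : Osc n, ⟪phi X, Y⟫ = -⟪X, phi Y⟫ := by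
  apply osc_induction₂
  · rintro X Y (⟨i, rfl⟩ | ⟨i, rfl⟩ | rfl | rfl) (⟨j, rfl⟩ | ⟨j, rfl⟩ | rfl | rfl) <;>
      simp [hphi.he, hphi.hE, hphi.hxi, hphi.hzeta, i_ee, i_eE, i_Ee, i_EE, i_exi, i_xie,
        i_Exi, i_xiE, i_ez, i_ze, i_Ez, i_zE, i_xixi, i_xiz, i_zxi, i_zz, -PiLp.inner_apply] <;>
      (try by_cases h : i = j) <;> simp_all [-PiLp.inner_apply]
  · intro Y; simp
  · intro X; simp
  · intro x y Y hx hy; simp only [map_add, inner_add_left, inner_add_right, hx, hy]; ring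
  · intro X y z hy hz; simp only [map_add, inner_add_left, inner_add_right, hy, hz]; ring
  · intro c x Y h
    simp only [map_smul, real_inner_smul_left, real_inner_smul_right, h]; ring
  · intro c X y h
    simp only [map_smul, real_inner_smul_left, real_inner_smul_right, h]; ring

set_option maxHeartbeats 1000000 in
lemma F_skew (lam : Fin n → ℝ) (phi El : Osc n →ₗ[ℝ] Osc n)
    (hphi : IsPhi n phi) (hEl : IsElam n lam El) :
    ∀ X Y : Osc n, ⟪El (phi X), Y⟫ = -⟪X, El (phi Y)⟫ := by
  apply osc_induction₂
  · rintro X Y (⟨i, rfl⟩ | ⟨i, rfl⟩ | rfl | rfl) (⟨j, rfl⟩ | ⟨j, rfl⟩ | rfl | rfl) <;>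
      simp [hphi.he, hphi.hE, hphi.hxi, hphi.hzeta, hEl.he, hEl.hE, hEl.hxi, hEl.hzeta,
        i_ee, i_eE, i_Ee, i_EE, i_exi, i_xie, i_Exi, i_xiE, i_ez, i_ze, i_Ez, i_zE,
        i_xixi, i_xiz, i_zxi, i_zz, real_inner_smul_left, real_inner_smul_right, -PiLp.inner_apply] <;>
      (try by_cases h : i = j) <;> simp_all [-PiLp.inner_apply]
  · intro Y; simp
  · intro X; simp
  · intro x y Y hx hy; simp only [map_add, inner_add_left, inner_add_right, hx, hy]; ring
  · intro X y z hy hz; simp only [map_add, inner_add_left, inner_add_right, hy, hz]; ring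
  · intro c x Y h
    simp only [map_smul, real_inner_smul_left, real_inner_smul_right, h]; ring
  · intro c X y h
    simp only [map_smul, real_inner_smul_left, real_inner_smul_right, h]; ring

lemma br_self (lam : Fin n → ℝ) (br : Osc n →ₗ[ℝ] Osc n →ₗ[ℝ] Osc n)
    (hbr : IsOscBracket n lam br) (X : Osc n) : br X X = 0 := by
  have h := hbr.anti X X
  have h2 : (2 : ℝ) • br X X = 0 := by rw [two_smul]; nth_rewrite 2 [h]; simp
  exact (smul_eq_zero.mp h2).resolve_left (by norm_num)

set_option maxHeartbeats 1000000 in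
lemma br_formula (lam : Fin n → ℝ) (br : Osc n →ₗ[ℝ] Osc n →ₗ[ℝ] Osc n)
    (phi El : Osc n →ₗ[ℝ] Osc n)
    (hbr : IsOscBracket n lam br) (hphi : IsPhi n phi) (hEl : IsElam n lam El) :
    ∀ X Y : Osc n, br X Y =
      ⟪phi X, Y⟫ • oXi n + ⟪X, oZeta n⟫ • El (phi Y) - ⟪Y, oZeta n⟫ • El (phi X) := by
  apply osc_induction₂
  · rintro X Y (⟨i, rfl⟩ | ⟨i, rfl⟩ | rfl | rfl) (⟨j, rfl⟩ | ⟨j, rfl⟩ | rfl | rfl)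
    · simp [hbr.ee, hphi.he, i_Ee, i_ez, -PiLp.inner_apply]
    · rw [hbr.eE]
      simp only [hphi.he, i_EE, i_ez, i_Ez, zero_smul, add_zero, sub_zero]
      by_cases h : i = j <;> simp [h, -PiLp.inner_apply]
    · simp [hbr.exi, hphi.he, i_Exi, i_ez, i_xiz, hphi.hxi, -PiLp.inner_apply]
    · rw [hbr.anti, hbr.zee]
      simp [(by rw [← real_inner_self_eq_norm_sq, i_zz] : ‖oZeta n‖ ^ 2 = 1), hphi.he, hphi.hzeta, hEl.hE, i_Ez, i_ez, i_zz, -PiLp.inner_apply]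
    · rw [hbr.anti, hbr.eE]
      simp only [hphi.hE, inner_neg_left, i_ee, i_Ez, i_ez, zero_smul, add_zero, sub_zero]
      by_cases h : i = j <;> simp [h, eq_comm, -PiLp.inner_apply]
    · simp [hbr.EE, hphi.hE, i_Ez, i_eE, -PiLp.inner_apply]
    · simp [hbr.Exi, hphi.hE, i_exi, i_Ez, i_xiz, hphi.hxi, -PiLp.inner_apply]
    · rw [hbr.anti, hbr.zeE]
      simp [(by rw [← real_inner_self_eq_norm_sq, i_zz] : ‖oZeta n‖ ^ 2 = 1), hphi.hE, hphi.hzeta, hEl.he, i_Ez, i_ez, i_zz, -PiLp.inner_apply]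
    · rw [hbr.anti, hbr.exi]
      simp [hphi.hxi, i_xiz, i_ez, hphi.he, hEl.hE, -PiLp.inner_apply]
    · rw [hbr.anti, hbr.Exi]
      simp [hphi.hxi, i_xiz, i_Ez, hphi.hE, hEl.he, -PiLp.inner_apply]
    · simp [br_self lam br hbr, hphi.hxi, i_xiz, -PiLp.inner_apply]
    · simp [hbr.xize, hphi.hxi, hphi.hzeta, i_xiz, i_zz, -PiLp.inner_apply]
    · rw [hbr.zee]
      simp [(by rw [← real_inner_self_eq_norm_sq, i_zz] : ‖oZeta n‖ ^ 2 = 1), hphi.hzeta, hphi.he, hEl.hE, i_ze, i_zz, i_ez, -PiLp.inner_apply]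
    · rw [hbr.zeE]
      simp [(by rw [← real_inner_self_eq_norm_sq, i_zz] : ‖oZeta n‖ ^ 2 = 1), hphi.hzeta, hphi.hE, hEl.he, i_zE, i_zz, i_Ez, -PiLp.inner_apply]
    · rw [hbr.anti, hbr.xize]
      simp [hphi.hzeta, hphi.hxi, i_zxi, i_xiz, i_zz, -PiLp.inner_apply]
    · simp [br_self lam br hbr, hphi.hzeta, i_zz, -PiLp.inner_apply]
  · intro Y; simp
  · intro X; simp
  · intro x y Y hx hy
    simp only [map_add, LinearMap.add_apply, inner_add_left, hx, hy]
    module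
  · intro X y z hy hz
    simp only [map_add, inner_add_left, inner_add_right, hy, hz]
    module
  · intro c x Y h
    simp only [map_smul, LinearMap.smul_apply, real_inner_smul_left, h]
    module
  · intro c X y h
    simp only [map_smul, real_inner_smul_left, real_inner_smul_right, h]
    module

end OscAux

/-- Lemma 1: invariant form of the Nomizu operator on the oscillator group:
`A_V Z = ½ η(V) φ(Z) + ½ η(Z) φ(V) − θ(Z) E_λ φ(V) + ½ g(φ(V), Z) ξ`. -/
theorem nomizu_invariant_form (n : ℕ) (hn : 1 ≤ n) (lam : Fin n → ℝ)
    (br nab : Osc n →ₗ[ℝ] Osc n →ₗ[ℝ] Osc n)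
    (hbr : IsOscBracket n lam br) (hlc : IsLeviCivita n br nab)
    (phi El : Osc n →ₗ[ℝ] Osc n) (hphi : IsPhi n phi) (hEl : IsElam n lam El) :
    ∀ V Z : Osc n,
      nomizu nab V Z =
        ((1/2) * ⟪V, oXi n⟫) • phi Z + ((1/2) * ⟪Z, oXi n⟫) • phi V
          - ⟪Z, oZeta n⟫ • El (phi V) + ((1/2) * ⟪phi V, Z⟫) • oXi n := by
  intro V Z
  apply ext_inner_right ℝ
  intro W
  have hk := hlc Z V W
  rw [OscAux.br_formula lam br phi El hbr hphi hEl Z V,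
      OscAux.br_formula lam br phi El hbr hphi hEl V W,
      OscAux.br_formula lam br phi El hbr hphi hEl W Z] at hk
  simp only [inner_add_left, inner_sub_left, real_inner_smul_left] at hk
  have r1 : ⟪phi Z, V⟫ = -⟪phi V, Z⟫ := by
    rw [OscAux.phi_skew phi hphi Z V, real_inner_comm]
  have r2 : ⟪El (phi W), Z⟫ = -⟪El (phi Z), W⟫ := by
    rw [OscAux.F_skew lam phi El hphi hEl W Z, real_inner_comm]
  have r3 : ⟪El (phi Z), V⟫ = -⟪El (phi V), Z⟫ := by
    rw [OscAux.F_skew lam phi El hphi hEl Z V, real_inner_comm]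
  have r4 : ⟪El (phi W), V⟫ = -⟪El (phi V), W⟫ := by
    rw [OscAux.F_skew lam phi El hphi hEl W V, real_inner_comm]
  have r5 : ⟪oXi n, Z⟫ = ⟪Z, oXi n⟫ := real_inner_comm _ _
  have r6 : ⟪phi W, Z⟫ = -⟪phi Z, W⟫ := by
    rw [OscAux.phi_skew phi hphi W Z, real_inner_comm]
  have r7 : ⟪oXi n, V⟫ = ⟪V, oXi n⟫ := real_inner_comm _ _
  rw [r1, r2, r3, r4, r5, r6, r7] at hk
  have hL : ⟪nomizu nab V Z, W⟫ = -⟪nab Z V, W⟫ := by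
    rw [nomizu]; exact inner_neg_left _ _
  rw [hL]
  simp only [inner_add_left, inner_sub_left, real_inner_smul_left]
  linarith [hk]
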